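/- Let (C, E, s) be a Frobenius extriangulated category with finite-dimensional Hom-spaces and T ∈ C basic rigid. The following are equivalent: (a) every X ∈ C admits a conflation X → T_0 → T_1 with T_0, T_1 ∈ Add(T); (b) for every X ∈ C, E(T, X) = 0 implies X ∈ Add(T). Consequently, if C is moreover extriangulated 2-Calabi–Yau (E(X,Y) ≅ E(Y,X)^* bifunctorially), then T is cluster tilting if and only if (a)/(b) hold. -/

import Mathlib

/-!
STATEMENT 8: Let (C, E, s) be a Frobenius extriangulated category with
finite-dimensional Hom-spaces and T basic rigid.  Then
(a) every X admits a conflation X → T₀ → T₁ with T₀, T₁ ∈ Add(T)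
is equivalent to
(b) for every X, E(T,X) = 0 implies X ∈ Add(T).
Consequently, if C is moreover extriangulated 2-Calabi–Yau, then T is cluster
tilting (i.e. every X admits a conflation T₁ → T₀ → X with T₀, T₁ ∈ Add(T))
if and only if (a)/(b) hold.
-/

open CategoryTheory Limits Opposite

universe v u u_1

variable (k : Type) [Field k]

/-- A (k-linear) extriangulated category structure in the sense of Nakaoka–Palu on a
preadditive k-linear category `C`: a biadditive extension functor `E`, a realization
relation `realizes α f g` expressing that the conflation `A → B → Z` realizes the
extension `α ∈ E(Z, A)`, together with the axioms used in this paper: existence of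
realizations, split = zero, and the long exact `Hom`–`E` sequences associated to a
conflation (Nakaoka–Palu; Gorsky–Nakaoka–Palu Thm 3.5). -/
structure Extriangulated (C : Type u) [Category.{v} C] [Preadditive C]
    [CategoryTheory.Linear k C] where
  E : Cᵒᵖ ⥤ C ⥤ ModuleCat.{u_1} k
  realizes : ∀ {A Z : C}, ((E.obj (op Z)).obj A) → ∀ {B : C}, (A ⟶ B) → (B ⟶ Z) → Prop
  realize_exists : ∀ {A Z : C} (α : (E.obj (op Z)).obj A),
    ∃ (B : C) (f : A ⟶ B) (g : B ⟶ Z), realizes α f g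
  comp_zero : ∀ {A Z B : C} (α : (E.obj (op Z)).obj A) (f : A ⟶ B) (g : B ⟶ Z),
    realizes α f g → f ≫ g = 0
  realizes_zero : ∀ {A Z B : C} (f : A ⟶ B) (g : B ⟶ Z),
    realizes (0 : (E.obj (op Z)).obj A) f g →
      (∃ r : B ⟶ A, f ≫ r = 𝟙 A) ∧ (∃ s : Z ⟶ B, s ≫ g = 𝟙 Z)
  split_zero : ∀ {A Z B : C} (α : (E.obj (op Z)).obj A) (f : A ⟶ B) (g : B ⟶ Z),
    realizes α f g → (∃ r : B ⟶ A, f ≫ r = 𝟙 A) → α = 0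
  ex₁ : ∀ {A Z B T : C} (α : (E.obj (op Z)).obj A) (f : A ⟶ B) (g : B ⟶ Z),
    realizes α f g → ∀ (h : T ⟶ B), h ≫ g = 0 → ∃ h' : T ⟶ A, h' ≫ f = h
  ex₂ : ∀ {A Z B T : C} (α : (E.obj (op Z)).obj A) (f : A ⟶ B) (g : B ⟶ Z),
    realizes α f g → ∀ (h : T ⟶ Z), ((E.map h.op).app A) α = 0 → ∃ h' : T ⟶ B, h' ≫ g = h
  ex₂' : ∀ {A Z B T : C} (α : (E.obj (op Z)).obj A) (f : A ⟶ B) (g : B ⟶ Z),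
    realizes α f g → ∀ (h' : T ⟶ B), ((E.map (h' ≫ g).op).app A) α = 0
  ex₃ : ∀ {A Z B T : C} (α : (E.obj (op Z)).obj A) (f : A ⟶ B) (g : B ⟶ Z),
    realizes α f g → ∀ (β : (E.obj (op T)).obj A), ((E.obj (op T)).map f) β = 0 →
      ∃ h : T ⟶ Z, ((E.map h.op).app A) α = β
  ex₃' : ∀ {A Z B T : C} (α : (E.obj (op Z)).obj A) (f : A ⟶ B) (g : B ⟶ Z),
    realizes α f g → ∀ (h : T ⟶ Z), ((E.obj (op T)).map f) (((E.map h.op).app A) α) = 0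
  ex₄ : ∀ {A Z B T : C} (α : (E.obj (op Z)).obj A) (f : A ⟶ B) (g : B ⟶ Z),
    realizes α f g → ∀ (h : B ⟶ T), f ≫ h = 0 → ∃ h' : Z ⟶ T, g ≫ h' = h
  ex₅ : ∀ {A Z B T : C} (α : (E.obj (op Z)).obj A) (f : A ⟶ B) (g : B ⟶ Z),
    realizes α f g → ∀ (h : A ⟶ T), ((E.obj (op Z)).map h) α = 0 → ∃ h' : B ⟶ T, f ≫ h' = h
  ex₅' : ∀ {A Z B T : C} (α : (E.obj (op Z)).obj A) (f : A ⟶ B) (g : B ⟶ Z),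
    realizes α f g → ∀ (h' : B ⟶ T), ((E.obj (op Z)).map (f ≫ h')) α = 0
  ex₆ : ∀ {A Z B T : C} (α : (E.obj (op Z)).obj A) (f : A ⟶ B) (g : B ⟶ Z),
    realizes α f g → ∀ (β : (E.obj (op Z)).obj T), ((E.map g.op).app T) β = 0 →
      ∃ h : A ⟶ T, ((E.obj (op Z)).map h) α = β
  ex₆' : ∀ {A Z B T : C} (α : (E.obj (op Z)).obj A) (f : A ⟶ B) (g : B ⟶ Z),
    realizes α f g → ∀ (h : A ⟶ T), ((E.map g.op).app T) (((E.obj (op Z)).map h) α) = 0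

namespace Extriangulated

variable {k} {C : Type u} [Category.{v} C] [Preadditive C] [CategoryTheory.Linear k C]
  [HasFiniteBiproducts C]

/-- `(f, g)` is a conflation: it realizes some extension class. -/
def Conflation (σ : Extriangulated k C) {A B Z : C} (f : A ⟶ B) (g : B ⟶ Z) : Prop :=
  ∃ α, σ.realizes α f g

/-- `P` is projective: `E(P, X) = 0` for all `X`. -/
def Projective (σ : Extriangulated k C) (P : C) : Prop :=
  ∀ (X : C) (α : (σ.E.obj (op P)).obj X), α = 0

/-- `I` is injective: `E(X, I) = 0` for all `X`. -/
def Injective (σ : Extriangulated k C) (I : C) : Prop :=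
  ∀ (X : C) (α : (σ.E.obj (op X)).obj I), α = 0

/-- `C` has enough projectives: every `X` admits a conflation `K → P → X` with `P`
projective. -/
def EnoughProjectives (σ : Extriangulated k C) : Prop :=
  ∀ X : C, ∃ (K P : C) (f : K ⟶ P) (g : P ⟶ X),
    σ.Conflation f g ∧ σ.Projective P

/-- `C` has enough injectives: every `X` admits a conflation `X → I → K` with `I`
injective. -/
def EnoughInjectives (σ : Extriangulated k C) : Prop :=
  ∀ X : C, ∃ (I K : C) (f : X ⟶ I) (g : I ⟶ K),
    σ.Conflation f g ∧ σ.Injective I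

/-- Frobenius: enough projectives and injectives, and the two classes coincide. -/
def Frobenius (σ : Extriangulated k C) : Prop :=
  σ.EnoughProjectives ∧ σ.EnoughInjectives ∧ ∀ X : C, (σ.Projective X ↔ σ.Injective X)

/-- `T` is rigid: `E(T, T) = 0`. -/
def Rigid (σ : Extriangulated k C) (T : C) : Prop :=
  ∀ α : (σ.E.obj (op T)).obj T, α = 0

/-- `σ` is extriangulated 2-Calabi–Yau: there is a bifunctorial duality
`E(X,Y) ≅ E(Y,X)^*`. -/
def CY2 (σ : Extriangulated k C) : Prop :=
  ∃ e : ∀ X Y : C,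
      ((σ.E.obj (op X)).obj Y) ≃ₗ[k] Module.Dual k ((σ.E.obj (op Y)).obj X),
    (∀ (X X' Y : C) (f : X' ⟶ X) (β : (σ.E.obj (op X)).obj Y)
        (γ : (σ.E.obj (op Y)).obj X'),
      e X' Y (((σ.E.map f.op).app Y) β) γ = e X Y β (((σ.E.obj (op Y)).map f) γ)) ∧
    (∀ (X Y Y' : C) (g : Y' ⟶ Y) (β : (σ.E.obj (op X)).obj Y')
        (γ : (σ.E.obj (op Y)).obj X),
      e X Y (((σ.E.obj (op X)).map g) β) γ = e X Y' β (((σ.E.map g.op).app X) γ))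

end Extriangulated

/-- `X` is in the additive closure of `T`: a retract of a finite direct sum of copies
of `T`. -/
def InAdd {C : Type u} [Category.{v} C] [Preadditive C] [HasFiniteBiproducts C]
    (T X : C) : Prop :=
  ∃ (n : ℕ) (s : X ⟶ ⨁ (fun _ : Fin n => T)) (r : (⨁ fun _ : Fin n => T) ⟶ X),
    s ≫ r = 𝟙 X

/-- `X` is indecomposable. -/
def Indecomposable {C : Type u} [Category.{v} C] [Preadditive C] [HasFiniteBiproducts C]
    (X : C) : Prop :=
  letI := hasBinaryBiproducts_of_finite_biproducts C
  ¬ IsZero X ∧ ∀ Y Z : C, Nonempty (X ≅ Y ⊞ Z) → IsZero Y ∨ IsZero Z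

/-- `T` is basic: it decomposes into finitely many pairwise non-isomorphic
indecomposable direct summands. -/
def Basic {C : Type u} [Category.{v} C] [Preadditive C] [HasFiniteBiproducts C]
    (T : C) : Prop :=
  ∃ (n : ℕ) (M : Fin n → C), (∀ i, Indecomposable (M i)) ∧
    (∀ i j, i ≠ j → IsEmpty (M i ≅ M j)) ∧ Nonempty (T ≅ ⨁ M)


set_option linter.unusedSectionVars false
set_option maxHeartbeats 1000000

namespace Extriangulated

variable {k} {C : Type u} [Category.{v} C] [Preadditive C] [CategoryTheory.Linear k C]
  [HasFiniteBiproducts C] (σ : Extriangulated k C)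

theorem eMapComp {Z A Y W : C} (f : A ⟶ Y) (g : Y ⟶ W) (x : (σ.E.obj (op Z)).obj A) :
    (σ.E.obj (op Z)).map g ((σ.E.obj (op Z)).map f x) = (σ.E.obj (op Z)).map (f ≫ g) x := by
  rw [CategoryTheory.Functor.map_comp]; rfl

theorem ePullComp {Z A V W : C} (f : V ⟶ W) (g : W ⟶ Z) (x : (σ.E.obj (op Z)).obj A) :
    (σ.E.map f.op).app A ((σ.E.map g.op).app A x) = (σ.E.map (f ≫ g).op).app A x := by
  rw [op_comp, CategoryTheory.Functor.map_comp]; rfl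

theorem eNat {Z A Y V : C} (f : A ⟶ Y) (v : V ⟶ Z) (x : (σ.E.obj (op Z)).obj A) :
    (σ.E.obj (op V)).map f ((σ.E.map v.op).app A x)
      = (σ.E.map v.op).app Y ((σ.E.obj (op Z)).map f x) :=
  (ConcreteCategory.congr_hom ((σ.E.map v.op).naturality f) x).symm

theorem ePullId {Z A : C} (x : (σ.E.obj (op Z)).obj A) :
    (σ.E.map (𝟙 Z).op).app A x = x := by
  rw [op_id, σ.E.map_id]; rfl

theorem ePushId {Z A : C} (x : (σ.E.obj (op Z)).obj A) :
    (σ.E.obj (op Z)).map (𝟙 A) x = x := by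
  rw [CategoryTheory.Functor.map_id]; rfl

theorem eZeroSnd {Z O : C} (hO : IsZero O) (x : (σ.E.obj (op Z)).obj O) : x = 0 := by
  obtain ⟨B, f, g, hr⟩ := σ.realize_exists x
  exact σ.split_zero x f g hr ⟨0, hO.eq_of_src _ _⟩

theorem eZeroFst {O A : C} (hO : IsZero O) (x : (σ.E.obj (op O)).obj A) : x = 0 := by
  obtain ⟨B, f, g, hr⟩ := σ.realize_exists x
  have h := σ.ex₂' x f g hr (0 : O ⟶ B)
  rwa [hO.eq_of_src ((0 : O ⟶ B) ≫ g) (𝟙 O), σ.ePullId] at h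

theorem ePushZero {Z A Y : C} (x : (σ.E.obj (op Z)).obj A) :
    (σ.E.obj (op Z)).map (0 : A ⟶ Y) x = 0 := by
  obtain ⟨O, hO⟩ := HasZeroObject.zero (C := C)
  have h : (0 : A ⟶ Y) = (0 : A ⟶ O) ≫ (0 : O ⟶ Y) := by simp
  rw [h, ← σ.eMapComp, show (σ.E.obj (op Z)).map (0 : A ⟶ O) x = 0 from σ.eZeroSnd hO _,
    map_zero]

theorem ePullZero {Z A V : C} (x : (σ.E.obj (op Z)).obj A) :
    (σ.E.map (0 : V ⟶ Z).op).app A x = 0 := by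
  obtain ⟨O, hO⟩ := HasZeroObject.zero (C := C)
  have h : (0 : V ⟶ Z) = (0 : V ⟶ O) ≫ (0 : O ⟶ Z) := by simp
  rw [h, ← σ.ePullComp, show (σ.E.map (0 : O ⟶ Z).op).app A x = 0 from σ.eZeroFst hO _,
    map_zero]

theorem ePushAdd {Z A Y : C} (v w : A ⟶ Y) (x : (σ.E.obj (op Z)).obj A) :
    (σ.E.obj (op Z)).map (v + w) x
      = (σ.E.obj (op Z)).map v x + (σ.E.obj (op Z)).map w x := by
  letI := hasBinaryBiproducts_of_finite_biproducts C
  have key : (σ.E.obj (op Z)).map (v ≫ biprod.inl + w ≫ biprod.inr) x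
      = (σ.E.obj (op Z)).map (v ≫ biprod.inl) x + (σ.E.obj (op Z)).map (w ≫ biprod.inr) x := by
    set ρ := (σ.E.obj (op Z)).map (v ≫ biprod.inl + w ≫ biprod.inr) x
      - (σ.E.obj (op Z)).map (v ≫ biprod.inl) x - (σ.E.obj (op Z)).map (w ≫ biprod.inr) x
      with hρ
    have h1 : (σ.E.obj (op Z)).map (biprod.fst : Y ⊞ Y ⟶ Y) ρ = 0 := by
      rw [hρ, map_sub, map_sub, σ.eMapComp, σ.eMapComp, σ.eMapComp,
        show (v ≫ biprod.inl + w ≫ biprod.inr) ≫ biprod.fst = v by simp,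
        show (v ≫ biprod.inl) ≫ biprod.fst = v by simp,
        show (w ≫ biprod.inr) ≫ biprod.fst = (0 : A ⟶ Y) by simp,
        σ.ePushZero, sub_self, zero_sub, neg_zero]
    have h2 : (σ.E.obj (op Z)).map (biprod.snd : Y ⊞ Y ⟶ Y) ρ = 0 := by
      rw [hρ, map_sub, map_sub, σ.eMapComp, σ.eMapComp, σ.eMapComp,
        show (v ≫ biprod.inl + w ≫ biprod.inr) ≫ biprod.snd = w by simp,
        show (v ≫ biprod.inl) ≫ biprod.snd = (0 : A ⟶ Y) by simp,
        show (w ≫ biprod.inr) ≫ biprod.snd = w by simp,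
        σ.ePushZero, sub_zero, sub_self]
    obtain ⟨B, a, b, hr⟩ := σ.realize_exists ρ
    obtain ⟨p₁, hp₁⟩ := σ.ex₅ ρ a b hr biprod.fst h1
    obtain ⟨p₂, hp₂⟩ := σ.ex₅ ρ a b hr biprod.snd h2
    have h0 : ρ = 0 := σ.split_zero ρ a b hr ⟨p₁ ≫ biprod.inl + p₂ ≫ biprod.inr, by
      rw [Preadditive.comp_add, ← Category.assoc, ← Category.assoc, hp₁, hp₂, biprod.total]⟩
    rw [hρ, sub_sub, sub_eq_zero] at h0
    exact h0
  have hvw : v + w = (v ≫ biprod.inl + w ≫ biprod.inr) ≫ biprod.desc (𝟙 Y) (𝟙 Y) := by simp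
  rw [hvw, ← σ.eMapComp, key, map_add, σ.eMapComp, σ.eMapComp,
    show (v ≫ biprod.inl) ≫ biprod.desc (𝟙 Y) (𝟙 Y) = v by simp,
    show (w ≫ biprod.inr) ≫ biprod.desc (𝟙 Y) (𝟙 Y) = w by simp]

theorem ePullAdd {Z A V : C} (v w : V ⟶ Z) (x : (σ.E.obj (op Z)).obj A) :
    (σ.E.map (v + w).op).app A x
      = (σ.E.map v.op).app A x + (σ.E.map w.op).app A x := by
  letI := hasBinaryBiproducts_of_finite_biproducts C
  have key : (σ.E.map (biprod.fst ≫ v + biprod.snd ≫ w : V ⊞ V ⟶ Z).op).app A x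
      = (σ.E.map (biprod.fst ≫ v : V ⊞ V ⟶ Z).op).app A x
        + (σ.E.map (biprod.snd ≫ w : V ⊞ V ⟶ Z).op).app A x := by
    set ρ := (σ.E.map (biprod.fst ≫ v + biprod.snd ≫ w : V ⊞ V ⟶ Z).op).app A x
      - (σ.E.map (biprod.fst ≫ v : V ⊞ V ⟶ Z).op).app A x
      - (σ.E.map (biprod.snd ≫ w : V ⊞ V ⟶ Z).op).app A x with hρ
    have h1 : (σ.E.map (biprod.inl : V ⟶ V ⊞ V).op).app A ρ = 0 := by
      rw [hρ, map_sub, map_sub, σ.ePullComp, σ.ePullComp, σ.ePullComp,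
        show biprod.inl ≫ (biprod.fst ≫ v + biprod.snd ≫ w) = v by simp,
        show biprod.inl ≫ (biprod.fst ≫ v) = v by simp,
        show biprod.inl ≫ (biprod.snd ≫ w) = (0 : V ⟶ Z) by simp,
        σ.ePullZero, sub_self, zero_sub, neg_zero]
    have h2 : (σ.E.map (biprod.inr : V ⟶ V ⊞ V).op).app A ρ = 0 := by
      rw [hρ, map_sub, map_sub, σ.ePullComp, σ.ePullComp, σ.ePullComp,
        show biprod.inr ≫ (biprod.fst ≫ v + biprod.snd ≫ w) = w by simp,
        show biprod.inr ≫ (biprod.fst ≫ v) = (0 : V ⟶ Z) by simp,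
        show biprod.inr ≫ (biprod.snd ≫ w) = w by simp,
        σ.ePullZero, sub_zero, sub_self]
    obtain ⟨B, a, b, hr⟩ := σ.realize_exists ρ
    obtain ⟨s₁, hs₁⟩ := σ.ex₂ ρ a b hr biprod.inl h1
    obtain ⟨s₂, hs₂⟩ := σ.ex₂ ρ a b hr biprod.inr h2
    have h0 := σ.ex₂' ρ a b hr (biprod.fst ≫ s₁ + biprod.snd ≫ s₂)
    rw [show (biprod.fst ≫ s₁ + biprod.snd ≫ s₂) ≫ b = 𝟙 (V ⊞ V) by
        rw [Preadditive.add_comp, Category.assoc, Category.assoc, hs₁, hs₂, biprod.total],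
      σ.ePullId, hρ, sub_sub, sub_eq_zero] at h0
    exact h0
  have hvw : v + w = biprod.lift (𝟙 V) (𝟙 V) ≫ (biprod.fst ≫ v + biprod.snd ≫ w) := by simp
  rw [hvw, ← σ.ePullComp, key, map_add, σ.ePullComp, σ.ePullComp,
    show biprod.lift (𝟙 V) (𝟙 V) ≫ (biprod.fst ≫ v) = v by simp,
    show biprod.lift (𝟙 V) (𝟙 V) ≫ (biprod.snd ≫ w) = w by simp]

theorem eVanishPush {Z T W : C} (hT : ∀ y : (σ.E.obj (op Z)).obj T, y = 0)
    (hW : InAdd T W) : ∀ x : (σ.E.obj (op Z)).obj W, x = 0 := by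
  obtain ⟨n, s, r, hsr⟩ := hW
  have hQ : ∀ x : (σ.E.obj (op Z)).obj (⨁ fun _ : Fin n => T), x = 0 := by
    intro x
    obtain ⟨B, a, b, hr⟩ := σ.realize_exists x
    choose w hw using fun j => σ.ex₅ x a b hr (biproduct.π (fun _ : Fin n => T) j) (hT _)
    refine σ.split_zero x a b hr ⟨∑ j, w j ≫ biproduct.ι (fun _ : Fin n => T) j, ?_⟩
    rw [Preadditive.comp_sum]
    rw [Finset.sum_congr rfl (fun j _ => by
      rw [← Category.assoc, hw j] :
      ∀ j ∈ Finset.univ, a ≫ w j ≫ biproduct.ι (fun _ : Fin n => T) j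
        = biproduct.π (fun _ : Fin n => T) j ≫ biproduct.ι (fun _ : Fin n => T) j)]
    exact biproduct.total
  intro x
  have hx : x = (σ.E.obj (op Z)).map r ((σ.E.obj (op Z)).map s x) := by
    rw [σ.eMapComp, hsr, σ.ePushId]
  rw [hx, hQ ((σ.E.obj (op Z)).map s x), map_zero]

theorem eVanishPull {A T W : C} (hT : ∀ y : (σ.E.obj (op T)).obj A, y = 0)
    (hW : InAdd T W) : ∀ x : (σ.E.obj (op W)).obj A, x = 0 := by
  obtain ⟨n, s, r, hsr⟩ := hW
  have hQ : ∀ x : (σ.E.obj (op (⨁ fun _ : Fin n => T))).obj A, x = 0 := by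
    intro x
    obtain ⟨B, a, b, hr⟩ := σ.realize_exists x
    choose t ht using fun j => σ.ex₂ x a b hr (biproduct.ι (fun _ : Fin n => T) j) (hT _)
    have h0 := σ.ex₂' x a b hr (∑ j, biproduct.π (fun _ : Fin n => T) j ≫ t j)
    rw [show (∑ j, biproduct.π (fun _ : Fin n => T) j ≫ t j) ≫ b
          = 𝟙 (⨁ fun _ : Fin n => T) by
        rw [Preadditive.sum_comp]
        rw [Finset.sum_congr rfl (fun j _ => by
          rw [Category.assoc, ht j] :
          ∀ j ∈ Finset.univ, (biproduct.π (fun _ : Fin n => T) j ≫ t j) ≫ b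
            = biproduct.π (fun _ : Fin n => T) j ≫ biproduct.ι (fun _ : Fin n => T) j)]
        exact biproduct.total,
      σ.ePullId] at h0
    exact h0
  intro x
  have hx : x = (σ.E.map s.op).app A ((σ.E.map r.op).app A x) := by
    rw [σ.ePullComp, hsr, σ.ePullId]
  rw [hx, hQ ((σ.E.map r.op).app A x), map_zero]


end Extriangulated

section AuxAdd

variable {k} {C : Type u} [Category.{v} C] [Preadditive C] [CategoryTheory.Linear k C]
  [HasFiniteBiproducts C]

theorem inAdd_sum (T : C) (n : ℕ) : InAdd T (⨁ fun _ : Fin n => T) :=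
  ⟨n, 𝟙 _, 𝟙 _, Category.id_comp _⟩

theorem inAdd_retract {T X W : C} (s : X ⟶ W) (r : W ⟶ X) (h : s ≫ r = 𝟙 X)
    (hW : InAdd T W) : InAdd T X := by
  obtain ⟨n, s', r', h'⟩ := hW
  exact ⟨n, s ≫ s', r' ≫ r, by
    rw [Category.assoc, ← Category.assoc s' r', h', Category.id_comp, h]⟩

theorem exists_approx [∀ X Y : C, FiniteDimensional k (X ⟶ Y)] (T K : C) :
    ∃ (d : ℕ) (g : (⨁ fun _ : Fin d => T) ⟶ K),
      ∀ u : T ⟶ K, ∃ v : T ⟶ (⨁ fun _ : Fin d => T), v ≫ g = u := by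
  classical
  refine ⟨Module.finrank k (T ⟶ K),
    biproduct.desc (fun j => Module.finBasis k (T ⟶ K) j), fun u => ?_⟩
  refine ⟨∑ j, (Module.finBasis k (T ⟶ K)).repr u j •
    biproduct.ι (fun _ : Fin (Module.finrank k (T ⟶ K)) => T) j, ?_⟩
  rw [Preadditive.sum_comp]
  rw [Finset.sum_congr rfl (fun j _ => by
    rw [Linear.smul_comp, biproduct.ι_desc] :
    ∀ j ∈ Finset.univ, ((Module.finBasis k (T ⟶ K)).repr u j •
        biproduct.ι (fun _ : Fin (Module.finrank k (T ⟶ K)) => T) j) ≫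
          biproduct.desc (fun j => Module.finBasis k (T ⟶ K) j)
      = (Module.finBasis k (T ⟶ K)).repr u j • Module.finBasis k (T ⟶ K) j)]
  exact (Module.finBasis k (T ⟶ K)).sum_repr u

end AuxAdd

namespace Stmt8

theorem coresolution_iff_and_CY_consequence
    {C : Type u} [Category.{v} C] [Preadditive C] [CategoryTheory.Linear k C]
    [HasFiniteBiproducts C]
    [∀ X Y : C, FiniteDimensional k (X ⟶ Y)]
    (σ : Extriangulated k C) (hFrob : σ.Frobenius)
    (T : C) (hbasic : Basic T) (hrigid : σ.Rigid T) :
    ((∀ X : C, ∃ (T₀ T₁ : C) (f : X ⟶ T₀) (g : T₀ ⟶ T₁),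
        σ.Conflation f g ∧ InAdd T T₀ ∧ InAdd T T₁)
      ↔ (∀ X : C, (∀ α : (σ.E.obj (op T)).obj X, α = 0) → InAdd T X)) ∧
    (σ.CY2 →
      ((∀ X : C, ∃ (T₁ T₀ : C) (f : T₁ ⟶ T₀) (g : T₀ ⟶ X),
          σ.Conflation f g ∧ InAdd T T₁ ∧ InAdd T T₀)
        ↔ (∀ X : C, ∃ (T₀ T₁ : C) (f : X ⟶ T₀) (g : T₀ ⟶ T₁),
            σ.Conflation f g ∧ InAdd T T₀ ∧ InAdd T T₁))) := by
  classical
  obtain ⟨hEP, hEI, hPIff⟩ := hFrob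
  -- Direction (a) → (b)
  have dir1 : (∀ X : C, ∃ (T₀ T₁ : C) (f : X ⟶ T₀) (g : T₀ ⟶ T₁),
      σ.Conflation f g ∧ InAdd T T₀ ∧ InAdd T T₁) →
      ∀ X : C, (∀ α : (σ.E.obj (op T)).obj X, α = 0) → InAdd T X := by
    intro ha X hX
    obtain ⟨T₀, T₁, f, g, ⟨α, hr⟩, hT₀, hT₁⟩ := ha X
    obtain ⟨n, s, r, hsr⟩ := hT₁
    choose v hv using fun j : Fin n =>
      σ.ex₂ α f g hr (biproduct.ι (fun _ : Fin n => T) j ≫ r) (hX _)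
    have key : (∑ j, biproduct.π (fun _ : Fin n => T) j ≫ v j) ≫ g = r := by
      rw [Preadditive.sum_comp]
      rw [Finset.sum_congr rfl (fun j _ => by
        rw [Category.assoc, hv j, ← Category.assoc] :
        ∀ j ∈ Finset.univ, (biproduct.π (fun _ : Fin n => T) j ≫ v j) ≫ g
          = (biproduct.π (fun _ : Fin n => T) j ≫ biproduct.ι (fun _ : Fin n => T) j) ≫ r)]
      rw [← Preadditive.sum_comp, biproduct.total, Category.id_comp]
    have hα : α = 0 := by
      have h := σ.ex₂' α f g hr (s ≫ ∑ j, biproduct.π (fun _ : Fin n => T) j ≫ v j)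
      rwa [Category.assoc, key, hsr, σ.ePullId] at h
    rw [hα] at hr
    obtain ⟨⟨rr, hrr⟩, -⟩ := σ.realizes_zero f g hr
    exact inAdd_retract f rr hrr hT₀
  -- Direction (b) → (a)
  have dir2 : (∀ X : C, (∀ α : (σ.E.obj (op T)).obj X, α = 0) → InAdd T X) →
      ∀ X : C, ∃ (T₀ T₁ : C) (f : X ⟶ T₀) (g : T₀ ⟶ T₁),
        σ.Conflation f g ∧ InAdd T T₀ ∧ InAdd T T₁ := by
    intro hb X
    obtain ⟨I, K, i, p, ⟨δ, hδ⟩, hI⟩ := hEI X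
    obtain ⟨d, g, hg⟩ := exists_approx (k := k) T K
    obtain ⟨M, f, h, hα⟩ := σ.realize_exists ((σ.E.map g.op).app X δ)
    have hvanT' : ∀ y : (σ.E.obj (op T)).obj (⨁ fun _ : Fin d => T), y = 0 :=
      σ.eVanishPush hrigid (inAdd_sum T d)
    suffices hM : ∀ β : (σ.E.obj (op T)).obj M, β = 0 by
      exact ⟨M, ⨁ fun _ : Fin d => T, f, h, ⟨_, hα⟩, hb M hM, inAdd_sum T d⟩
    intro β
    obtain ⟨T₂, P, q, π, ⟨ε, hε⟩, hP⟩ := hEP T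
    obtain ⟨u, hu⟩ := σ.ex₆ ε q π hε β (hP M _)
    have h2 : (σ.E.obj (op T)).map (u ≫ h) ε = 0 := by
      rw [← σ.eMapComp, hu]; exact hvanT' _
    obtain ⟨w, hw⟩ := σ.ex₅ ε q π hε (u ≫ h) h2
    obtain ⟨w', hw'⟩ := σ.ex₂ _ f h hα w (hP X _)
    have h4 : (u - q ≫ w') ≫ h = 0 := by
      rw [Preadditive.sub_comp, Category.assoc, hw', hw, sub_self]
    obtain ⟨u', hu'⟩ := σ.ex₁ _ f h hα (u - q ≫ w') h4
    have hsplit : u = u' ≫ f + q ≫ w' := by rw [hu']; abel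
    have h7 : ∀ γ : (σ.E.obj (op T)).obj X, (σ.E.obj (op T)).map f γ = 0 := by
      intro γ
      obtain ⟨h₀, hh₀⟩ := σ.ex₃ δ i p hδ γ (hI T _)
      obtain ⟨v₀, hv₀⟩ := hg h₀
      have hγ : γ = (σ.E.map v₀.op).app X ((σ.E.map g.op).app X δ) := by
        rw [σ.ePullComp, hv₀, hh₀]
      have h8 : (σ.E.obj (op (⨁ fun _ : Fin d => T))).map f ((σ.E.map g.op).app X δ) = 0 := by
        have h9 := σ.ex₅' _ f h hα (𝟙 M)
        rwa [Category.comp_id] at h9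
      rw [hγ, σ.eNat, h8, map_zero]
    rw [← hu, hsplit, σ.ePushAdd, ← σ.eMapComp u' f, h7 _, σ.ex₅' _ q π hε w', add_zero]
  refine ⟨⟨dir1, dir2⟩, ?_⟩
  rintro ⟨e, adj₁, adj₂⟩
  constructor
  · -- cluster tilting → (a)
    intro hcl X
    -- From the cluster-tilting property and 2-Calabi-Yau we get property (b):
    have hb' : ∀ Y : C, (∀ α : (σ.E.obj (op T)).obj Y, α = 0) → InAdd T Y := by
      intro Y hY
      obtain ⟨T₁', T₀', a, b, ⟨μ, hμ⟩, hT₁', hT₀'⟩ := hcl Y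
      have hYT : ∀ ζ : (σ.E.obj (op Y)).obj T, ζ = 0 := by
        intro ζ
        have hz : e Y T ζ = 0 := by
          apply LinearMap.ext
          intro x
          simp [hY x]
        exact (e Y T).map_eq_zero_iff.mp hz
      obtain ⟨n, s, r, hsr⟩ := hT₁'
      choose w hw using fun j : Fin n =>
        σ.ex₅ μ a b hμ (s ≫ biproduct.π (fun _ : Fin n => T) j) (hYT _)
      have key2 : a ≫ (∑ j, w j ≫ biproduct.ι (fun _ : Fin n => T) j) = s := by
        rw [Preadditive.comp_sum]
        rw [Finset.sum_congr rfl (fun j _ => by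
          rw [← Category.assoc, hw j, Category.assoc] :
          ∀ j ∈ Finset.univ, a ≫ w j ≫ biproduct.ι (fun _ : Fin n => T) j
            = s ≫ (biproduct.π (fun _ : Fin n => T) j ≫ biproduct.ι (fun _ : Fin n => T) j))]
        rw [← Preadditive.comp_sum, biproduct.total, Category.comp_id]
      have hμ0 : μ = 0 := σ.split_zero μ a b hμ
        ⟨(∑ j, w j ≫ biproduct.ι (fun _ : Fin n => T) j) ≫ r, by
          rw [← Category.assoc, key2, hsr]⟩
      rw [hμ0] at hμ
      obtain ⟨-, s', hs'⟩ := σ.realizes_zero a b hμ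
      exact inAdd_retract s' b hs' hT₀'
    obtain ⟨I, K, i, p, ⟨δ, hδ⟩, hIinj⟩ := hEI X
    have hIproj : σ.Projective I := (hPIff I).mpr hIinj
    obtain ⟨T₁', T₀', a, b, ⟨μ, hμ⟩, hT₁', hT₀'⟩ := hcl K
    obtain ⟨W, c, d, hν⟩ := σ.realize_exists ((σ.E.map b.op).app X δ)
    have hWT : ∀ lam : (σ.E.obj (op W)).obj T, lam = 0 := by
      intro lam
      obtain ⟨IT, ST, iT, pT, ⟨δT, hδT⟩, hIT⟩ := hEI T
      have hITproj : σ.Projective IT := (hPIff IT).mpr hIT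
      obtain ⟨u, hu⟩ := σ.ex₃ δT iT pT hδT lam (hIT W _)
      have hc0 : (σ.E.obj (op T₀')).map c ((σ.E.map b.op).app X δ) = 0 := by
        have h0 := σ.ex₅' ((σ.E.map b.op).app X δ) c d hν (𝟙 W)
        rwa [Category.comp_id] at h0
      have hτb : (σ.E.map b.op).app ST ((σ.E.obj (op K)).map (c ≫ u) δ) = 0 := by
        rw [← σ.eNat (c ≫ u) b δ, ← σ.eMapComp c u, hc0, map_zero]
      have hτ : (σ.E.obj (op K)).map (c ≫ u) δ = 0 := by
        have hz : e K ST ((σ.E.obj (op K)).map (c ≫ u) δ) = 0 := by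
          apply LinearMap.ext
          intro γ
          rw [LinearMap.zero_apply]
          obtain ⟨h₃, hh₃⟩ := σ.ex₆ δT iT pT hδT γ (hITproj K _)
          have hpull : (σ.E.map h₃.op).app T₁' μ = 0 := σ.eVanishPush hrigid hT₁' _
          obtain ⟨h₄, hh₄⟩ := σ.ex₂ μ a b hμ h₃ hpull
          rw [← hh₃, ← adj₁ K T ST h₃ ((σ.E.obj (op K)).map (c ≫ u) δ) δT,
            ← hh₄, ← σ.ePullComp h₄ b, hτb]
          simp
        exact (e K ST).map_eq_zero_iff.mp hz
      obtain ⟨z, hz⟩ := σ.ex₅ δ i p hδ (c ≫ u) hτ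
      obtain ⟨ib, hib⟩ := σ.ex₅ ((σ.E.map b.op).app X δ) c d hν i (hIinj T₀' _)
      have h9 : c ≫ (u - ib ≫ z) = 0 := by
        rw [Preadditive.comp_sub, ← Category.assoc, hib, hz, sub_self]
      obtain ⟨v, hv⟩ := σ.ex₄ ((σ.E.map b.op).app X δ) c d hν (u - ib ≫ z) h9
      have husplit : u = ib ≫ z + d ≫ v := by rw [hv]; abel
      rw [← hu, husplit, σ.ePullAdd, ← σ.ePullComp ib z, ← σ.ePullComp d v,
        show (σ.E.map z.op).app T δT = 0 from hIproj T _, map_zero,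
        show (σ.E.map v.op).app T δT = 0 from σ.eVanishPull hrigid hT₀' _,
        map_zero, add_zero]
    have hWT0 : ∀ β : (σ.E.obj (op T)).obj W, β = 0 := by
      intro β
      have hz : e T W β = 0 := by
        apply LinearMap.ext
        intro x
        simp [hWT x]
      exact (e T W).map_eq_zero_iff.mp hz
    exact ⟨W, T₀', c, d, ⟨_, hν⟩, hb' W hWT0, hT₀'⟩
  · -- (a) → cluster tilting
    intro ha X
    have hb := dir1 ha
    obtain ⟨K', P, q, π, ⟨ρ, hρ⟩, hP⟩ := hEP X
    have hPinj : σ.Injective P := (hPIff P).mp hP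
    obtain ⟨S₀, S₁, m, n', ⟨μ, hμ⟩, hS₀, hS₁⟩ := ha K'
    obtain ⟨W, c, d, hν⟩ := σ.realize_exists ((σ.E.obj (op X)).map m ρ)
    suffices hW : ∀ β : (σ.E.obj (op T)).obj W, β = 0 by
      exact ⟨S₀, W, c, d, ⟨_, hν⟩, hS₀, hb W hW⟩
    intro β
    obtain ⟨T₂, PT, qT, πT, ⟨ε, hε⟩, hPT⟩ := hEP T
    have hPTinj : σ.Injective PT := (hPIff PT).mp hPT
    obtain ⟨u, hu⟩ := σ.ex₆ ε qT πT hε β (hPT W _)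
    have hd0 : (σ.E.map d.op).app S₀ ((σ.E.obj (op X)).map m ρ) = 0 := by
      have h0 := σ.ex₂' ((σ.E.obj (op X)).map m ρ) c d hν (𝟙 W)
      rwa [Category.id_comp] at h0
    have hτm : (σ.E.obj (op T₂)).map m ((σ.E.map (u ≫ d).op).app K' ρ) = 0 := by
      rw [σ.eNat m (u ≫ d) ρ, ← σ.ePullComp u d, hd0, map_zero]
    have hτ : (σ.E.map (u ≫ d).op).app K' ρ = 0 := by
      have hz : e T₂ K' ((σ.E.map (u ≫ d).op).app K' ρ) = 0 := by
        apply LinearMap.ext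
        intro γ
        rw [LinearMap.zero_apply]
        obtain ⟨h₃, hh₃⟩ := σ.ex₃ ε qT πT hε γ (hPTinj K' _)
        have hpush : (σ.E.obj (op S₁)).map h₃ μ = 0 := σ.eVanishPull hrigid hS₁ _
        obtain ⟨h₄, hh₄⟩ := σ.ex₅ μ m n' hμ h₃ hpush
        rw [← hh₃, ← adj₂ T₂ T K' h₃ ((σ.E.map (u ≫ d).op).app K' ρ) ε,
          ← hh₄, ← σ.eMapComp m h₄, hτm]
        simp
      exact (e T₂ K').map_eq_zero_iff.mp hz
    obtain ⟨z, hz⟩ := σ.ex₂ ρ q π hρ (u ≫ d) hτ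
    obtain ⟨π', hπ'⟩ := σ.ex₂ ((σ.E.obj (op X)).map m ρ) c d hν π (hP S₀ _)
    have h9 : (u - z ≫ π') ≫ d = 0 := by
      rw [Preadditive.sub_comp, Category.assoc, hπ', hz, sub_self]
    obtain ⟨v, hv⟩ := σ.ex₁ ((σ.E.obj (op X)).map m ρ) c d hν (u - z ≫ π') h9
    have husplit : u = v ≫ c + z ≫ π' := by rw [hv]; abel
    rw [← hu, husplit, σ.ePushAdd, ← σ.eMapComp v c, ← σ.eMapComp z π',
      show (σ.E.obj (op T)).map v ε = 0 from σ.eVanishPush hrigid hS₀ _, map_zero,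
      show (σ.E.obj (op T)).map z ε = 0 from hPinj T _, map_zero, add_zero]


end Stmt8
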